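/- The flower graph F is bad, i.e., F does not admit a good edge-labeling. -/

import Mathlib

/-- A walk is *increasing* with respect to an edge-labeling if the sequence of labels of its
edges, traversed from the first endpoint to the last, is non-decreasing. -/
def IsIncreasing {V : Type*} (G : SimpleGraph V) (lab : Sym2 V → ℝ) {x y : V}
    (p : G.Walk x y) : Prop :=
  (p.edges.map lab).Chain' (· ≤ ·)

/-- An edge-labeling is *good* if for every ordered pair `(x, y)` of vertices there do not
exist two distinct increasing paths from `x` to `y`. -/
def IsGoodLabeling {V : Type*} (G : SimpleGraph V) (lab : Sym2 V → ℝ) : Prop :=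
  ∀ (x y : V) (p q : G.Walk x y), p.IsPath → q.IsPath →
    IsIncreasing G lab p → IsIncreasing G lab q → p = q

/-- The flower graph: vertices `Sum.inl i` (the five cycle vertices `v_i`) and `Sum.inr i`
(the five extra vertices `c_i`); edges `v_i v_{i+1}` and `c_i v_i`, `c_i v_{i+2}`
(indices modulo `5`). -/
def Flower : SimpleGraph (ZMod 5 ⊕ ZMod 5) :=
  SimpleGraph.fromRel (fun a b =>
    (∃ i : ZMod 5, a = Sum.inl i ∧ b = Sum.inl (i + 1)) ∨
    (∃ i : ZMod 5, a = Sum.inr i ∧ (b = Sum.inl i ∨ b = Sum.inl (i + 2))))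

namespace FlowerAux
open SimpleGraph Walk

def v (i : ZMod 5) : ZMod 5 ⊕ ZMod 5 := Sum.inl i
def c (i : ZMod 5) : ZMod 5 ⊕ ZMod 5 := Sum.inr i

lemma zne (i : ZMod 5) {k : ZMod 5} (h : k ≠ 0) : i ≠ i + k := by simp [h]

lemma adj_vv (i j : ZMod 5) (h : j = i + 1) : Flower.Adj (v i) (v j) := by
  subst h; unfold Flower; rw [SimpleGraph.fromRel_adj]
  exact ⟨by simp [v, zne i (by decide : (1:ZMod 5) ≠ 0)], Or.inl (Or.inl ⟨_, rfl, rfl⟩)⟩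

lemma adj_cv (i j : ZMod 5) (h : j = i) : Flower.Adj (c i) (v j) := by
  subst h; unfold Flower; rw [SimpleGraph.fromRel_adj]
  exact ⟨by simp [v, c], Or.inl (Or.inr ⟨_, rfl, Or.inl rfl⟩)⟩

lemma adj_cv2 (i j : ZMod 5) (h : j = i + 2) : Flower.Adj (c i) (v j) := by
  subst h; unfold Flower; rw [SimpleGraph.fromRel_adj]
  exact ⟨by simp [v, c], Or.inl (Or.inr ⟨_, rfl, Or.inr rfl⟩)⟩

lemma sh (i : ZMod 5) {x y z : ZMod 5} (h : x + y = z) : i + z = i + x + y := by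
  rw [add_assoc, h]

lemma sh0 (i : ZMod 5) {x y : ZMod 5} (h : x + y = 0) : i = i + x + y := by
  rw [add_assoc, h, add_zero]

-- walk v i - v (i+1) - v (i+2)
def P1 (i : ZMod 5) : Flower.Walk (v i) (v (i+2)) :=
  cons (adj_vv i (i+1) rfl) (cons (adj_vv (i+1) (i+2) (sh i (by decide))) nil)

-- walk v i - c i - v (i+2)
def P2 (i : ZMod 5) : Flower.Walk (v i) (v (i+2)) :=
  cons (adj_cv i i rfl).symm (cons (adj_cv2 i (i+2) rfl) nil)

-- walk v i - v(i+1) - v(i+2) - v(i+3)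
def P3 (i : ZMod 5) : Flower.Walk (v i) (v (i+3)) :=
  cons (adj_vv i (i+1) rfl) (cons (adj_vv (i+1) (i+2) (sh i (by decide)))
    (cons (adj_vv (i+2) (i+3) (sh i (by decide))) nil))

-- walk v i - c (i+3) - v (i+3)
def P4 (i : ZMod 5) : Flower.Walk (v i) (v (i+3)) :=
  cons (adj_cv2 (i+3) i (sh0 i (by decide))).symm (cons (adj_cv (i+3) (i+3) rfl) nil)

-- walk v i - v(i+1) - v(i+2) - v(i+3) - v(i+4)
def P5 (i : ZMod 5) : Flower.Walk (v i) (v (i+4)) :=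
  cons (adj_vv i (i+1) rfl) (cons (adj_vv (i+1) (i+2) (sh i (by decide)))
    (cons (adj_vv (i+2) (i+3) (sh i (by decide)))
      (cons (adj_vv (i+3) (i+4) (sh i (by decide))) nil)))

-- single edge v i - v (i+4)
def P6 (i : ZMod 5) : Flower.Walk (v i) (v (i+4)) :=
  cons (adj_vv (i+4) i (sh0 i (by decide))).symm nil

lemma ne_sum (i j : ZMod 5) : v i ≠ c j := by simp [v, c]

lemma P1_isPath (i : ZMod 5) : (P1 i).IsPath := by
  simp [P1, Walk.isPath_def, v, c] <;> decide +revert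
lemma P2_isPath (i : ZMod 5) : (P2 i).IsPath := by
  simp [P2, Walk.isPath_def, v, c] <;> decide +revert
lemma P3_isPath (i : ZMod 5) : (P3 i).IsPath := by
  simp [P3, Walk.isPath_def, v, c] <;> decide +revert
lemma P4_isPath (i : ZMod 5) : (P4 i).IsPath := by
  simp [P4, Walk.isPath_def, v, c] <;> decide +revert
lemma P5_isPath (i : ZMod 5) : (P5 i).IsPath := by
  simp [P5, Walk.isPath_def, v, c] <;> decide +revert
lemma P6_isPath (i : ZMod 5) : (P6 i).IsPath := by
  simp [P6, Walk.isPath_def, v, c] <;> decide +revert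
lemma P1_ne_P2 (i : ZMod 5) : P1 i ≠ P2 i := by
  intro h
  have := congrArg Walk.support h
  simp [P1, P2] at this <;> simp [v, c] at this
lemma P3_ne_P4 (i : ZMod 5) : P3 i ≠ P4 i := by
  intro h
  have := congrArg Walk.support h
  simp [P3, P4] at this <;> simp [v, c] at this
lemma P5_ne_P6 (i : ZMod 5) : P5 i ≠ P6 i := by
  intro h
  have := congrArg Walk.support h
  simp [P5, P6] at this <;> simp [v, c] at this

variable (lab : Sym2 (ZMod 5 ⊕ ZMod 5) → ℝ)

lemma H1 (hg : IsGoodLabeling Flower lab) (i : ZMod 5)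
    (h : lab s(v i, v (i+1)) ≤ lab s(v (i+1), v (i+2))) :
    lab s(c i, v (i+2)) < lab s(c i, v i) := by
  by_contra hb
  push_neg at hb
  apply P1_ne_P2 i
  apply hg (v i) (v (i+2)) (P1 i) (P2 i) (P1_isPath i) (P2_isPath i)
  · simp [IsIncreasing, List.Chain', P1, Sym2.eq_swap]; exact h
  · simp [IsIncreasing, List.Chain', P2, Sym2.eq_swap]; exact hb

lemma H1' (hg : IsGoodLabeling Flower lab) (i : ZMod 5)
    (h : lab s(v (i+1), v (i+2)) ≤ lab s(v i, v (i+1))) :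
    lab s(c i, v i) < lab s(c i, v (i+2)) := by
  by_contra hb
  push_neg at hb
  have := hg (v (i+2)) (v i) (P1 i).reverse (P2 i).reverse
    (P1_isPath i).reverse (P2_isPath i).reverse
    (by simp [IsIncreasing, List.Chain', P1, Sym2.eq_swap]; exact h) (by simp [IsIncreasing, List.Chain', P2, Sym2.eq_swap]; exact hb)
  exact P1_ne_P2 i (by simpa using congrArg Walk.reverse this)

lemma H2 (hg : IsGoodLabeling Flower lab) (i : ZMod 5)
    (h1 : lab s(v i, v (i+1)) ≤ lab s(v (i+1), v (i+2)))
    (h2 : lab s(v (i+1), v (i+2)) ≤ lab s(v (i+2), v (i+3)))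
    (h3 : lab s(v (i+2), v (i+3)) ≤ lab s(v (i+3), v (i+4))) : False := by
  apply P5_ne_P6 i
  apply hg (v i) (v (i+4)) (P5 i) (P6 i) (P5_isPath i) (P6_isPath i)
  · simp [IsIncreasing, List.Chain', P5, Sym2.eq_swap]
    exact ⟨h1, h2, h3⟩
  · simp [IsIncreasing, List.Chain', P6]

lemma H2' (hg : IsGoodLabeling Flower lab) (i : ZMod 5)
    (h1 : lab s(v (i+3), v (i+4)) ≤ lab s(v (i+2), v (i+3)))
    (h2 : lab s(v (i+2), v (i+3)) ≤ lab s(v (i+1), v (i+2)))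
    (h3 : lab s(v (i+1), v (i+2)) ≤ lab s(v i, v (i+1))) : False := by
  apply P5_ne_P6 i
  have := hg (v (i+4)) (v i) (P5 i).reverse (P6 i).reverse
    (P5_isPath i).reverse (P6_isPath i).reverse
    (by simp [IsIncreasing, List.Chain', P5, Sym2.eq_swap]; exact ⟨h1, h2, h3⟩)
    (by simp [IsIncreasing, List.Chain', P6])
  simpa using congrArg Walk.reverse this

lemma H3 (hg : IsGoodLabeling Flower lab) (i : ZMod 5)
    (h1 : lab s(v i, v (i+1)) ≤ lab s(v (i+1), v (i+2)))
    (h2 : lab s(v (i+1), v (i+2)) ≤ lab s(v (i+2), v (i+3)))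
    (h3 : lab s(c (i+3), v i) ≤ lab s(c (i+3), v (i+3))) : False := by
  apply P3_ne_P4 i
  apply hg (v i) (v (i+3)) (P3 i) (P4 i) (P3_isPath i) (P4_isPath i)
  · simp [IsIncreasing, List.Chain', P3, Sym2.eq_swap]
    exact ⟨h1, h2⟩
  · simp [IsIncreasing, List.Chain', P4, Sym2.eq_swap]
    rw [show (s(v i, c (i+3)) : Sym2 _) = s(c (i+3), v i) from Sym2.eq_swap]
    exact h3

lemma H3' (hg : IsGoodLabeling Flower lab) (i : ZMod 5)
    (h1 : lab s(v (i+2), v (i+3)) ≤ lab s(v (i+1), v (i+2)))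
    (h2 : lab s(v (i+1), v (i+2)) ≤ lab s(v i, v (i+1)))
    (h3 : lab s(c (i+3), v (i+3)) ≤ lab s(c (i+3), v i)) : False := by
  apply P3_ne_P4 i
  have inc4 : IsIncreasing Flower lab (P4 i).reverse := by
    simp [IsIncreasing, List.Chain', P4, Sym2.eq_swap]
    rw [show (s(v i, c (i+3)) : Sym2 _) = s(c (i+3), v i) from Sym2.eq_swap]
    exact h3
  have := hg (v (i+3)) (v i) (P3 i).reverse (P4 i).reverse
    (P3_isPath i).reverse (P4_isPath i).reverse
    (by simp [IsIncreasing, List.Chain', P3, Sym2.eq_swap]; exact ⟨h1, h2⟩) inc4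
  simpa using congrArg Walk.reverse this

lemma main (lab : Sym2 (ZMod 5 ⊕ ZMod 5) → ℝ) (hg : IsGoodLabeling Flower lab) : False := by
  rcases le_total (lab s(v 0, v 1)) (lab s(v 1, v 2)) with s0 | s0 <;>
  rcases le_total (lab s(v 1, v 2)) (lab s(v 2, v 3)) with s1 | s1 <;>
  rcases le_total (lab s(v 2, v 3)) (lab s(v 3, v 4)) with s2 | s2 <;>
  rcases le_total (lab s(v 3, v 4)) (lab s(v 4, v 0)) with s3 | s3 <;>
  rcases le_total (lab s(v 4, v 0)) (lab s(v 0, v 1)) with s4 | s4 <;>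
  first
  | exact H2 lab hg 0 s0 s1 s2
  | exact H2' lab hg 0 s2 s1 s0
  | exact H3 lab hg 0 s0 s1 (le_of_lt (H1 lab hg 3 s3))
  | exact H3' lab hg 0 s1 s0 (le_of_lt (H1' lab hg 3 s3))
  | exact H2 lab hg 1 s1 s2 s3
  | exact H2' lab hg 1 s3 s2 s1
  | exact H3 lab hg 1 s1 s2 (le_of_lt (H1 lab hg 4 s4))
  | exact H3' lab hg 1 s2 s1 (le_of_lt (H1' lab hg 4 s4))
  | exact H2 lab hg 2 s2 s3 s4
  | exact H2' lab hg 2 s4 s3 s2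
  | exact H3 lab hg 2 s2 s3 (le_of_lt (H1 lab hg 0 s0))
  | exact H3' lab hg 2 s3 s2 (le_of_lt (H1' lab hg 0 s0))
  | exact H2 lab hg 3 s3 s4 s0
  | exact H2' lab hg 3 s0 s4 s3
  | exact H3 lab hg 3 s3 s4 (le_of_lt (H1 lab hg 1 s1))
  | exact H3' lab hg 3 s4 s3 (le_of_lt (H1' lab hg 1 s1))
  | exact H2 lab hg 4 s4 s0 s1
  | exact H2' lab hg 4 s1 s0 s4
  | exact H3 lab hg 4 s4 s0 (le_of_lt (H1 lab hg 2 s2))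
  | exact H3' lab hg 4 s0 s4 (le_of_lt (H1' lab hg 2 s2))

end FlowerAux

/-- The flower graph is bad: it does not admit a good edge-labeling. -/
theorem flower_bad : ¬ ∃ lab : Sym2 (ZMod 5 ⊕ ZMod 5) → ℝ, IsGoodLabeling Flower lab := by
  rintro ⟨lab, hg⟩
  exact FlowerAux.main lab hg
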